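/- For infinite cardinals κ < λ, there is no group embedding (injective group homomorphism) of the alternating group Alt(λ) into the symmetric group Sym(κ). -/

import Mathlib

open Equiv Cardinal

/-- The alternating group on an arbitrary type `α`: the subgroup of `Equiv.Perm α`
generated by products of two transpositions, i.e. the group of permutations that are
compositions of an even number of transpositions. -/
def altGroup (α : Type*) [DecidableEq α] : Subgroup (Equiv.Perm α) :=
  Subgroup.closure {σ | ∃ τ₁ τ₂ : Equiv.Perm α, τ₁.IsSwap ∧ τ₂.IsSwap ∧ σ = τ₁ * τ₂}

theorem no_embedding_alt_into_sym {α β : Type u} [DecidableEq β]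
    [Infinite α] [Infinite β] (h : #α < #β) :
    ¬ ∃ f : altGroup β →* Equiv.Perm α, Function.Injective f := by
  rintro ⟨f, hf⟩
  -- an embedding of β-many disjoint 4-element blocks into β
  have hle : #(β × Fin 4) ≤ #β := by
    rw [Cardinal.mk_prod]
    simp only [Cardinal.lift_uzero, Cardinal.lift_id, Cardinal.mk_fintype, Fintype.card_fin,
      Cardinal.lift_natCast]
    calc #β * (4 : ℕ) ≤ #β * #β := by
          gcongr
          exact le_trans (le_of_lt (Cardinal.nat_lt_aleph0 4)) (Cardinal.aleph0_le_mk β)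
      _ = #β := Cardinal.mul_eq_self (Cardinal.aleph0_le_mk β)
  obtain ⟨e⟩ := (Cardinal.le_def _ _).mp hle
  set p : β → Fin 4 → β := fun i k => e (i, k) with hp
  have hpinj : ∀ i k j l, p i k = p j l → i = j ∧ k = l := by
    intro i k j l hpe
    have := e.injective hpe
    exact ⟨congrArg Prod.fst this, congrArg Prod.snd this⟩
  have hpne : ∀ i (k l : Fin 4), k ≠ l → p i k ≠ p i l :=
    fun i k l hkl hc => hkl (hpinj _ _ _ _ hc).2
  set a : β → Perm β := fun i => Equiv.swap (p i 0) (p i 2) * Equiv.swap (p i 0) (p i 1)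
    with ha
  set b : β → Perm β := fun i => Equiv.swap (p i 0) (p i 3) * Equiv.swap (p i 0) (p i 1)
    with hb
  have hamem : ∀ i, a i ∈ altGroup β := fun i =>
    Subgroup.subset_closure
      ⟨_, _, ⟨_, _, hpne i 0 2 (by decide), rfl⟩, ⟨_, _, hpne i 0 1 (by decide), rfl⟩, rfl⟩
  have hbmem : ∀ i, b i ∈ altGroup β := fun i =>
    Subgroup.subset_closure
      ⟨_, _, ⟨_, _, hpne i 0 3 (by decide), rfl⟩, ⟨_, _, hpne i 0 1 (by decide), rfl⟩, rfl⟩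
  have hafix : ∀ i x, (∀ k, x ≠ p i k) → a i x = x := by
    intro i x hx
    simp only [ha, Perm.mul_apply]
    rw [Equiv.swap_apply_of_ne_of_ne (hx 0) (hx 1), Equiv.swap_apply_of_ne_of_ne (hx 0) (hx 2)]
  have hbfix : ∀ i x, (∀ k, x ≠ p i k) → b i x = x := by
    intro i x hx
    simp only [hb, Perm.mul_apply]
    rw [Equiv.swap_apply_of_ne_of_ne (hx 0) (hx 1), Equiv.swap_apply_of_ne_of_ne (hx 0) (hx 3)]
  have hdisj : ∀ i j, i ≠ j → (a i).Disjoint (b j) := by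
    intro i j hij x
    by_cases hx : ∃ k, x = p i k
    · right
      obtain ⟨k', hk'⟩ := hx
      refine hbfix j x (fun k hk => hij ?_)
      exact (hpinj i k' j k (hk'.symm.trans hk)).1
    · left
      exact hafix i x (fun k hk => hx ⟨k, hk⟩)
  have key : ∀ i, (a i * b i * (a i)⁻¹ * (b i)⁻¹) (p i 0) = p i 1 := by
    intro i
    have h01 := hpne i 0 1 (by decide)
    have h02 := hpne i 0 2 (by decide)
    have h03 := hpne i 0 3 (by decide)
    have h12 := hpne i 1 2 (by decide)
    have h13 := hpne i 1 3 (by decide)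
    have h23 := hpne i 2 3 (by decide)
    simp only [ha, hb, mul_inv_rev, Equiv.swap_inv, Perm.mul_apply]
    rw [Equiv.swap_apply_left,
      Equiv.swap_apply_of_ne_of_ne (Ne.symm h03) (Ne.symm h13),
      Equiv.swap_apply_of_ne_of_ne (Ne.symm h03) (Ne.symm h23),
      Equiv.swap_apply_of_ne_of_ne (Ne.symm h03) (Ne.symm h13),
      Equiv.swap_apply_of_ne_of_ne (Ne.symm h03) (Ne.symm h13),
      Equiv.swap_apply_right, Equiv.swap_apply_left,
      Equiv.swap_apply_of_ne_of_ne (Ne.symm h01) h12]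
  set a' : β → altGroup β := fun i => ⟨a i, hamem i⟩ with ha'
  set b' : β → altGroup β := fun i => ⟨b i, hbmem i⟩ with hb'
  set A : β → Perm α := fun i => f (a' i) with hA
  set B : β → Perm α := fun i => f (b' i) with hB
  set C : β → Perm α := fun i => A i * B i * (A i)⁻¹ * (B i)⁻¹ with hC
  have hCf : ∀ i, C i = f (a' i * b' i * (a' i)⁻¹ * (b' i)⁻¹) := by
    intro i
    simp [hC, hA, hB, map_mul, map_inv]
  have hCne : ∀ i, C i ≠ 1 := by
    intro i hC1
    have h1 : a' i * b' i * (a' i)⁻¹ * (b' i)⁻¹ = 1 := by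
      apply hf
      rw [← hCf i, hC1, map_one]
    have hval : (a i * b i * (a i)⁻¹ * (b i)⁻¹ : Perm β) = 1 := by
      have := congrArg (Subtype.val) h1
      simpa using this
    have hk := key i
    rw [hval] at hk
    exact hpne i 0 1 (by decide) (by simpa using hk)
  have hmove : ∀ i, ∃ x, C i x ≠ x := by
    intro i
    by_contra hc
    push_neg at hc
    exact hCne i (Equiv.ext hc)
  choose X hX using hmove
  set g : β → α × α × α × α :=
    fun i => (X i, (A i)⁻¹ (X i), (B i)⁻¹ (X i), (B i)⁻¹ ((A i)⁻¹ (X i))) with hg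
  have hginj : ¬ Function.Injective g := by
    intro hgi
    have hle2 : #β ≤ #(α × α × α × α) := Cardinal.mk_le_of_injective hgi
    have hcard : #(α × α × α × α) = #α := by
      have ha0 := Cardinal.aleph0_le_mk α
      simp only [Cardinal.mk_prod, Cardinal.lift_id]
      rw [Cardinal.mul_eq_self ha0, Cardinal.mul_eq_self ha0, Cardinal.mul_eq_self ha0]
    rw [hcard] at hle2
    exact absurd h (not_lt.mpr hle2)
  rw [Function.not_injective_iff] at hginj
  obtain ⟨i, j, hgij, hij⟩ := hginj
  -- cross commutation
  have hcomm : Commute (A i) (B j) := by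
    have h1 : Commute (a i) (b j) := (hdisj i j hij).commute
    have h2 : a' i * b' j = b' j * a' i := Subtype.ext (by simpa using h1.eq)
    have := congrArg f h2
    show A i * B j = B j * A i
    simpa [hA, hB, map_mul] using this
  -- profile equalities
  have h1 : X j = X i := (congrArg (fun q => q.1) hgij).symm
  have h2 : (A i)⁻¹ (X i) = (A j)⁻¹ (X i) := by
    have := congrArg (fun q => q.2.1) hgij
    simpa [h1, hg] using this
  have h3 : (B i)⁻¹ (X i) = (B j)⁻¹ (X i) := by
    have := congrArg (fun q => q.2.2.1) hgij
    simpa [h1, hg] using this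
  have h4 : (B i)⁻¹ ((A i)⁻¹ (X i)) = (B j)⁻¹ ((A j)⁻¹ (X i)) := by
    have := congrArg (fun q => q.2.2.2) hgij
    simpa [h1, hg] using this
  -- step 1 : the inverses commute at X i
  have step1 : (A i)⁻¹ ((B i)⁻¹ (X i)) = (B i)⁻¹ ((A i)⁻¹ (X i)) := by
    have hcc : (A i)⁻¹ ((B j)⁻¹ (X i)) = (B j)⁻¹ ((A i)⁻¹ (X i)) := by
      have := congrArg (fun σ : Perm α => σ (X i)) hcomm.inv_inv.eq
      simpa [Perm.mul_apply] using this
    calc (A i)⁻¹ ((B i)⁻¹ (X i)) = (A i)⁻¹ ((B j)⁻¹ (X i)) := by rw [h3]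
      _ = (B j)⁻¹ ((A i)⁻¹ (X i)) := hcc
      _ = (B j)⁻¹ ((A j)⁻¹ (X i)) := by rw [h2]
      _ = (B i)⁻¹ ((A i)⁻¹ (X i)) := h4.symm
  -- final contradiction
  apply hX i
  show (A i * B i * (A i)⁻¹ * (B i)⁻¹) (X i) = X i
  simp only [Perm.mul_apply]
  rw [step1]
  simp
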